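/- Strong duality at the closed-form posterior: let μ, ν ∈ ℝⁿ and define P by P_{ij} = Q_{ij}·exp(−μ_j X_{ij} − ν_i Y_{ij}) for all i,j. If P is feasible, then J(P) = h(μ, ν). -/

import Mathlib

/-- The entropic objective `J(P) = ∑_{i,j} P_{ij}(log(P_{ij}/Q_{ij}) − 1)`,
with the convention that a term with `P_{ij} = 0` contributes `0`. -/
noncomputable def entObj {n : ℕ} (Q P : Matrix (Fin n) (Fin n) ℝ) : ℝ :=
  ∑ i, ∑ j, if P i j = 0 then (0 : ℝ) else P i j * (Real.log (P i j / Q i j) - 1)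

/-- Feasibility of a posterior matrix `P` with respect to the prior `Q`, the
directional sign templates `X`, `Y`, and the marginals `p`, `q`. -/
def Feasible {n : ℕ} (Q X Y : Matrix (Fin n) (Fin n) ℝ) (p q : Fin n → ℝ)
    (P : Matrix (Fin n) (Fin n) ℝ) : Prop :=
  (∀ i j, 0 ≤ P i j) ∧ (∀ i j, Q i j = 0 → P i j = 0) ∧
  (∀ j, ∑ i, X i j * P i j = p j) ∧ (∀ i, ∑ j, Y i j * P i j = q i)

/-- The dual function
`h(μ, ν) = −∑_{i,j} Q_{ij} exp(−μ_j X_{ij} − ν_i Y_{ij}) − ∑_j μ_j p_j − ∑_i ν_i q_i`. -/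
noncomputable def dualFun {n : ℕ} (Q X Y : Matrix (Fin n) (Fin n) ℝ) (p q : Fin n → ℝ)
    (μ ν : Fin n → ℝ) : ℝ :=
  -(∑ i, ∑ j, Q i j * Real.exp (-(μ j) * X i j - (ν i) * Y i j))
    - (∑ j, μ j * p j) - (∑ i, ν i * q i)

/-- Strong duality at the closed-form posterior
`P_{ij} = Q_{ij}·exp(−μ_j X_{ij} − ν_i Y_{ij})`: if `P` is feasible, then
`J(P) = h(μ, ν)`. -/
theorem strong_duality {n : ℕ} (hn : 1 ≤ n) (Q X Y : Matrix (Fin n) (Fin n) ℝ)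
    (hQ : ∀ i j, 0 ≤ Q i j)
    (hX : ∀ i j, X i j = -1 ∨ X i j = 0 ∨ X i j = 1)
    (hY : ∀ i j, Y i j = -1 ∨ Y i j = 0 ∨ Y i j = 1)
    (p q : Fin n → ℝ) (μ ν : Fin n → ℝ)
    (P : Matrix (Fin n) (Fin n) ℝ)
    (hPdef : ∀ i j, P i j = Q i j * Real.exp (-(μ j) * X i j - (ν i) * Y i j))
    (hP : Feasible Q X Y p q P) :
    entObj Q P = dualFun Q X Y p q μ ν := by
  obtain ⟨hP0, hPQ, hcol, hrow⟩ := hP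
  have key : ∀ i j, (if P i j = 0 then (0:ℝ)
      else P i j * (Real.log (P i j / Q i j) - 1))
      = P i j * (-(μ j) * X i j - (ν i) * Y i j)
        - Q i j * Real.exp (-(μ j) * X i j - (ν i) * Y i j) := by
    intro i j
    by_cases hq : Q i j = 0
    · have hp : P i j = 0 := by rw [hPdef, hq, zero_mul]
      simp [hp, hq]
    · have hppos : 0 < P i j := by
        rw [hPdef]
        exact mul_pos (lt_of_le_of_ne (hQ i j) (Ne.symm hq)) (Real.exp_pos _)
      have hdiv : Q i j * Real.exp (-(μ j) * X i j - (ν i) * Y i j) / Q i j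
          = Real.exp (-(μ j) * X i j - (ν i) * Y i j) := by
        field_simp
      rw [if_neg hppos.ne', hPdef, hdiv, Real.log_exp]
      ring
  have hsum : entObj Q P
      = (∑ i, ∑ j, P i j * (-(μ j) * X i j - (ν i) * Y i j))
        - (∑ i, ∑ j, Q i j * Real.exp (-(μ j) * X i j - (ν i) * Y i j)) := by
    unfold entObj
    simp_rw [key]
    rw [← Finset.sum_sub_distrib]
    exact Finset.sum_congr rfl fun i _ => Finset.sum_sub_distrib _ _
  have hlin : (∑ i, ∑ j, P i j * (-(μ j) * X i j - (ν i) * Y i j))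
      = -(∑ j, μ j * p j) - (∑ i, ν i * q i) := by
    have : ∀ i j, P i j * (-(μ j) * X i j - (ν i) * Y i j)
        = -(μ j) * (X i j * P i j) + (-(ν i)) * (Y i j * P i j) := by
      intro i j; ring
    simp_rw [this, Finset.sum_add_distrib]
    have h1 : (∑ i, ∑ j, -(μ j) * (X i j * P i j)) = -(∑ j, μ j * p j) := by
      rw [Finset.sum_comm]
      rw [← Finset.sum_neg_distrib]
      refine Finset.sum_congr rfl fun j _ => ?_
      rw [← Finset.mul_sum, hcol j]; ring
    have h2 : (∑ i, ∑ j, -(ν i) * (Y i j * P i j)) = -(∑ i, ν i * q i) := by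
      rw [← Finset.sum_neg_distrib]
      refine Finset.sum_congr rfl fun i _ => ?_
      rw [← Finset.mul_sum, hrow i]; ring
    rw [h1, h2]; ring
  rw [hsum, hlin]
  unfold dualFun
  ring
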